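/- arXiv:2512.20602 — 4 statements merged into one kernel-verified Lean document; each statement's English description precedes it below -/
import Mathlib

section
/- Under the two-sided quadratic model error bound F(x) − M(x) ≤ (L_U/2)‖x − x_k‖² for all x, if x⁺ minimizes x ↦ M(x) + (1/2)‖x − x_k‖²_Q over ℝ^m with Q positive definite, σ = λ_min(Q), and σ ≥ L_U/(2 − α₁) with α₁ ∈ (0,1), then the ratio ρ = (F(x_k) − F(x⁺)) / (F(x_k) − M(x⁺) − (1/2)‖x⁺ − x_k‖²_Q) satisfies ρ ≥ α₁ (assuming the denominator is positive). -/
/-- Sufficient condition for step acceptance. Under the upper quadratic model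
error bound with constant `L_U`, if the smallest eigenvalue `σ` of the positive definite
metric `Q` satisfies `σ ≥ L_U / (2 - α₁)`, then the acceptance ratio `Act/Pred ≥ α₁`. -/
theorem stmt4 {m : ℕ}
    (F M : EuclideanSpace ℝ (Fin m) → ℝ)
    (Q : EuclideanSpace ℝ (Fin m) →L[ℝ] EuclideanSpace ℝ (Fin m))
    (xk xplus : EuclideanSpace ℝ (Fin m)) (LU σ α₁ : ℝ)
    (hQsym : ∀ u v, (inner ℝ (Q u) v : ℝ) = inner ℝ u (Q v))
    (hσpos : 0 < σ)
    (hσmin : ∀ u, σ * ‖u‖ ^ 2 ≤ (inner ℝ (Q u) u : ℝ))   -- σ = λ_min(Q) lower bound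
    (hMconv : ConvexOn ℝ Set.univ M)
    (hMxk : M xk = F xk)
    (hLU : 0 ≤ LU)
    (herr : ∀ x, F x - M x ≤ (LU / 2) * ‖x - xk‖ ^ 2)
    (hmin : ∀ x, M xplus + (1 / 2) * (inner ℝ (Q (xplus - xk)) (xplus - xk) : ℝ)
              ≤ M x + (1 / 2) * (inner ℝ (Q (x - xk)) (x - xk) : ℝ))
    (hα₁ : 0 < α₁) (hα₁' : α₁ < 1)
    (hσ : σ ≥ LU / (2 - α₁))
    (hPred : 0 < F xk - M xplus - (1 / 2) * (inner ℝ (Q (xplus - xk)) (xplus - xk) : ℝ)) :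
    (F xk - F xplus) /
      (F xk - M xplus - (1 / 2) * (inner ℝ (Q (xplus - xk)) (xplus - xk) : ℝ)) ≥ α₁ := by
  set s := xplus - xk with hs
  set q : ℝ := (inner ℝ (Q s) s : ℝ) with hq
  have hn : 0 ≤ ‖s‖ ^ 2 := by positivity
  have hqσ : σ * ‖s‖ ^ 2 ≤ q := hσmin s
  have hqnn : 0 ≤ q := le_trans (by positivity) hqσ
  -- step lemma for each lam ∈ [0,1)
  have key : ∀ lam : ℝ, 0 ≤ lam → lam < 1 →
      lam / 2 * q ≤ M xk - M xplus - (1 / 2) * q := by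
    intro lam h0 h1
    set y := lam • xplus + (1 - lam) • xk with hy
    have hconv : M y ≤ lam * M xplus + (1 - lam) * M xk :=
      hMconv.2 (Set.mem_univ xplus) (Set.mem_univ xk) h0
        (by linarith : (0:ℝ) ≤ 1 - lam) (by ring)
    have hdiff : y - xk = lam • s := by
      simp only [hy, hs]
      module
    have hqy : (inner ℝ (Q (y - xk)) (y - xk) : ℝ) = lam ^ 2 * q := by
      rw [hdiff, map_smul, real_inner_smul_left, real_inner_smul_right, hq]
      ring
    have hm := hmin y
    rw [hqy] at hm
    have h1' : 0 < 1 - lam := by linarith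
    nlinarith [hconv, mul_pos h1' h1', mul_nonneg h0 hqnn, mul_nonneg (mul_nonneg h0 h0) hqnn]
  -- Pred ≥ q/2 via limit argument
  have hPq : q / 2 ≤ M xk - M xplus - (1 / 2) * q := by
    rcases eq_or_lt_of_le hqnn with hq0 | hq0
    · have := key 0 le_rfl one_pos
      rw [← hq0] at *
      linarith
    · refine le_of_forall_pos_le_add ?_
      intro ε hε
      set lam := max 0 (1 - 2 * ε / q) with hlam
      have hl0 : 0 ≤ lam := le_max_left _ _
      have hl1 : lam < 1 := by
        apply max_lt one_pos
        have : 0 < 2 * ε / q := by positivity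
        linarith
      have hge : 1 - 2 * ε / q ≤ lam := le_max_right _ _
      have := key lam hl0 hl1
      have h2 : q / 2 - ε ≤ lam / 2 * q := by
        have : (1 - 2 * ε / q) / 2 * q ≤ lam / 2 * q := by
          apply mul_le_mul_of_nonneg_right _ (le_of_lt hq0)
          linarith
        calc q / 2 - ε = (1 - 2 * ε / q) / 2 * q := by field_simp
          _ ≤ lam / 2 * q := this
      linarith
  have herr' := herr xplus
  have hLUσ : LU ≤ (2 - α₁) * σ := by
    rw [ge_iff_le, div_le_iff₀ (by linarith)] at hσ
    linarith
  rw [ge_iff_le, le_div_iff₀ hPred]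
  have h1 : (1 - α₁) * (F xk - M xplus - (1 / 2) * q) ≥ (1 - α₁) * (q / 2) := by
    have : q / 2 ≤ F xk - M xplus - (1 / 2) * q := by
      rw [← hMxk]; exact hPq
    nlinarith
  nlinarith [mul_nonneg (sub_nonneg.mpr hLUσ) hn, mul_le_mul_of_nonneg_left hqσ (by linarith : (0:ℝ) ≤ 2 - α₁)]
end

section
/- Under the two-sided model error bound −(L_L/2)‖y − x_k‖² ≤ F(y) − M(y) ≤ (L_U/2)‖y − x_k‖², with x⁺ the minimizer of M + (1/2)‖·−x_k‖²_Q, G := Q(x_k − x⁺), and σ := λ_min(Q), the following holds for all y: F(y) ≥ F(x⁺) + ⟨G, y − x_k⟩ + (1 − L_U/(2σ))⟨Q⁻¹G, G⟩ − (L_L/2)‖y − x_k‖². In particular, taking y = x_k gives F(x_k) − F(x⁺) ≥ (1/2)(2 − L_U/σ)‖x⁺ − x_k‖²_Q. -/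
/-- Gradient inequality for prox-convex under two-sided quadratic model error
bounds: for all `y`,
`F y ≥ F x⁺ + ⟪G, y - x_k⟫ + (1 - L_U/(2σ))⟪Q⁻¹G, G⟫ - (L_L/2)‖y - x_k‖²`,
with `G = Q(x_k - x⁺)`, `Q⁻¹G = x_k - x⁺`, and in particular (at `y = x_k`)
`F x_k - F x⁺ ≥ ½(2 - L_U/σ)‖x⁺ - x_k‖²_Q`. -/
theorem stmt11 {m : ℕ}
    (F M : EuclideanSpace ℝ (Fin m) → ℝ)
    (Q : EuclideanSpace ℝ (Fin m) →L[ℝ] EuclideanSpace ℝ (Fin m))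
    (xk xplus : EuclideanSpace ℝ (Fin m)) (LU LL σ : ℝ)
    (hQsym : ∀ u v, (inner ℝ (Q u) v : ℝ) = inner ℝ u (Q v))
    (hσpos : 0 < σ)
    (hσmin : ∀ u, σ * ‖u‖ ^ 2 ≤ (inner ℝ (Q u) u : ℝ))
    (hMconv : ConvexOn ℝ Set.univ M)
    (hMxk : M xk = F xk)
    (hLU : 0 ≤ LU) (hLL : LU ≤ LL)
    (herrU : ∀ y, F y - M y ≤ (LU / 2) * ‖y - xk‖ ^ 2)
    (herrL : ∀ y, -(LL / 2) * ‖y - xk‖ ^ 2 ≤ F y - M y)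
    (hmin : ∀ x, M xplus + (1 / 2) * (inner ℝ (Q (xplus - xk)) (xplus - xk) : ℝ)
              ≤ M x + (1 / 2) * (inner ℝ (Q (x - xk)) (x - xk) : ℝ)) :
    (∀ y, F y ≥ F xplus + (inner ℝ (Q (xk - xplus)) (y - xk) : ℝ)
          + (1 - LU / (2 * σ)) * (inner ℝ (xk - xplus) (Q (xk - xplus)) : ℝ)
          - (LL / 2) * ‖y - xk‖ ^ 2) ∧
    F xk - F xplus ≥ (1 / 2) * (2 - LU / σ) * (inner ℝ (Q (xplus - xk)) (xplus - xk) : ℝ) := by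
  -- subgradient inequality at the minimizer
  have hsub : ∀ x, 0 ≤ M x - M xplus + (inner ℝ (Q (xplus - xk)) (x - xplus) : ℝ) := by
    intro x
    set d : EuclideanSpace ℝ (Fin m) := xplus - xk with hd
    set u : EuclideanSpace ℝ (Fin m) := x - xplus with hu
    have hc : 0 ≤ (inner ℝ (Q u) u : ℝ) := le_trans (by positivity) (hσmin u)
    have key : ∀ t : ℝ, 0 < t → t ≤ 1 →
        -(t / 2) * (inner ℝ (Q u) u : ℝ) ≤ M x - M xplus + (inner ℝ (Q d) u : ℝ) := by
      intro t ht ht1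
      have hx_t : xplus + t • u = (1 - t) • xplus + t • x := by
        rw [hu]; module
      have hconv := hMconv.2 (Set.mem_univ xplus) (Set.mem_univ x)
        (by linarith : (0:ℝ) ≤ 1 - t) ht.le (by ring)
      rw [← hx_t] at hconv
      have hmin' := hmin (xplus + t • u)
      have hxk : xplus + t • u - xk = d + t • u := by rw [hd]; abel
      rw [hxk] at hmin'
      have h1 : (inner ℝ (Q u) d : ℝ) = inner ℝ (Q d) u := by
        rw [hQsym]; exact real_inner_comm _ _
      have hq : (inner ℝ (Q (d + t • u)) (d + t • u) : ℝ)
          = inner ℝ (Q d) d + 2 * t * inner ℝ (Q d) u + t ^ 2 * (inner ℝ (Q u) u : ℝ) := by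
        simp only [map_add, map_smul, inner_add_left, inner_add_right,
          real_inner_smul_left, real_inner_smul_right]
        linear_combination t * h1
      rw [hq] at hmin'
      simp only [smul_eq_mul] at hconv
      have h4 : t * (M xplus - M x - (inner ℝ (Q d) u : ℝ))
          ≤ t * (t / 2 * (inner ℝ (Q u) u : ℝ)) := by nlinarith [hconv, hmin']
      have h5 := (mul_le_mul_iff_right₀ ht).mp h4
      linarith
    by_contra h
    push_neg at h
    set A : ℝ := M x - M xplus + (inner ℝ (Q d) u : ℝ) with hA
    set c : ℝ := (inner ℝ (Q u) u : ℝ) with hcdef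
    have hA0 : A < 0 := by
      have : (inner ℝ (Q (xplus - xk)) (x - xplus) : ℝ) = inner ℝ (Q d) u := by rw [hd, hu]
      linarith [h]
    have hc1 : (0:ℝ) < c + 1 := by linarith
    have ht0 : 0 < min 1 (-A / (c + 1)) := by
      exact lt_min one_pos (div_pos (by linarith) hc1)
    have ht1 : min 1 (-A / (c + 1)) ≤ 1 := min_le_left _ _
    have hk := key _ ht0 ht1
    have htle : min 1 (-A / (c + 1)) ≤ -A / (c + 1) := min_le_right _ _
    have h2 : min 1 (-A / (c + 1)) * c ≤ (-A / (c + 1)) * c :=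
      mul_le_mul_of_nonneg_right htle hc
    have h3 : (-A / (c + 1)) * c ≤ -A := by
      rw [div_mul_eq_mul_div, div_le_iff₀ hc1]
      nlinarith
    linarith [hk, h2, h3]
  have hsub' : ∀ x, M xplus + (inner ℝ (Q (xk - xplus)) (x - xplus) : ℝ) ≤ M x := by
    intro x
    have hneg : xk - xplus = -(xplus - xk) := by abel
    have : (inner ℝ (Q (xk - xplus)) (x - xplus) : ℝ)
        = -(inner ℝ (Q (xplus - xk)) (x - xplus) : ℝ) := by
      rw [hneg, map_neg, inner_neg_left]
    linarith [hsub x, this]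
  set c : ℝ := (inner ℝ (Q (xk - xplus)) (xk - xplus) : ℝ) with hcdef
  have hc' : (inner ℝ (xk - xplus) (Q (xk - xplus)) : ℝ) = c := real_inner_comm _ _
  have hcflip : (inner ℝ (Q (xplus - xk)) (xplus - xk) : ℝ) = c := by
    have hneg : xplus - xk = -(xk - xplus) := by abel
    rw [hneg, map_neg, inner_neg_neg]
  have hσc := hσmin (xk - xplus)
  have hnflip : ‖xplus - xk‖ = ‖xk - xplus‖ := norm_sub_rev _ _
  have hmul : (LU / 2) * ‖xplus - xk‖ ^ 2 ≤ LU / (2 * σ) * c := by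
    rw [hnflip, show LU / (2 * σ) * c = LU * c / (2 * σ) from by ring,
      le_div_iff₀ (by positivity : (0:ℝ) < 2 * σ)]
    nlinarith [mul_le_mul_of_nonneg_left hσc hLU]
  have hfirst : ∀ y, F y ≥ F xplus + (inner ℝ (Q (xk - xplus)) (y - xk) : ℝ)
      + (1 - LU / (2 * σ)) * (inner ℝ (xk - xplus) (Q (xk - xplus)) : ℝ)
      - (LL / 2) * ‖y - xk‖ ^ 2 := by
    intro y
    have hL := herrL y
    have hU := herrU xplus
    have hs := hsub' y
    have hsplit : (inner ℝ (Q (xk - xplus)) (y - xplus) : ℝ)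
        = inner ℝ (Q (xk - xplus)) (y - xk) + c := by
      have : y - xplus = (y - xk) + (xk - xplus) := by abel
      rw [this, inner_add_right]
    rw [hc']
    rw [hsplit] at hs
    nlinarith [hmul]
  refine ⟨hfirst, ?_⟩
  have h := hfirst xk
  have h0 : (inner ℝ (Q (xk - xplus)) (xk - xk) : ℝ) = 0 := by simp
  have hn0 : ‖xk - xk‖ = 0 := by simp
  rw [h0, hn0, hc'] at h
  have heq : (1 / 2) * (2 - LU / σ) = 1 - LU / (2 * σ) := by
    field_simp
  rw [hcflip, heq]
  linarith [h]
end

section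
/- Let h : ℝ^d → ℝ be C¹ with β_h-Lipschitz gradient and ‖∇h‖ ≤ L_h, and let C : ℝ^m → ℝ^d be L_C-Lipschitz and C² with each ∇²C_i having γ_C-Lipschitz dependence and ‖Σᵢ vᵢ∇²Cᵢ(x)‖ ≤ β_C‖v‖. Let J_k := J_C(x_k), y := ∇h(C(x_k)), H := Σᵢ yᵢ ∇²Cᵢ(x_k), and define the Hessian-augmented model m(x) := h(C(x_k) + J_k d) + (1/2)dᵀHd with d = x − x_k. Then |h(C(x)) − m(x)| ≤ M₃‖d‖³ + M₄‖d‖⁴ for x near x_k, where M₃ = L_h γ_C/6 + β_h L_C β_C/2 and M₄ = β_h β_C²/8 + β_h L_C γ_C/6. -/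
open intervalIntegral in
lemma aux1 {F : Type*} [NormedAddCommGroup F] [NormedSpace ℝ F] [CompleteSpace F]
    (g g' : ℝ → F) (K : ℝ)
    (hd : ∀ t, HasDerivAt g (g' t) t)
    (hc : Continuous g')
    (hK : ∀ t ∈ Set.Icc (0:ℝ) 1, ‖g' t - g' 0‖ ≤ K * t) :
    ‖g 1 - g 0 - g' 0‖ ≤ K / 2 := by
  have hint : IntervalIntegrable g' MeasureTheory.volume 0 1 := hc.intervalIntegrable _ _
  have hftc : ∫ t in (0:ℝ)..1, g' t = g 1 - g 0 :=
    integral_eq_sub_of_hasDerivAt (fun t _ => hd t) hint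
  have heq : g 1 - g 0 - g' 0 = ∫ t in (0:ℝ)..1, (g' t - g' 0) := by
    rw [intervalIntegral.integral_sub hint intervalIntegrable_const, hftc,
      intervalIntegral.integral_const]
    simp
  rw [heq]
  have h1 : ‖∫ t in (0:ℝ)..1, (g' t - g' 0)‖ ≤ |∫ t in (0:ℝ)..1, K * t| := by
    apply intervalIntegral.norm_integral_le_abs_of_norm_le
    · refine MeasureTheory.ae_restrict_of_forall_mem measurableSet_uIoc ?_
      intro t ht
      rw [Set.uIoc_of_le (by norm_num : (0:ℝ) ≤ 1)] at ht
      exact hK t ⟨le_of_lt ht.1, ht.2⟩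
    · exact (continuous_const.mul continuous_id).intervalIntegrable _ _
  calc ‖∫ t in (0:ℝ)..1, (g' t - g' 0)‖ ≤ |∫ t in (0:ℝ)..1, K * t| := h1
    _ = K / 2 := by
        rw [intervalIntegral.integral_const_mul, integral_id]
        have h0 : 0 ≤ K := by
          have := hK 1 (by norm_num)
          nlinarith [norm_nonneg (g' 1 - g' 0)]
        rw [abs_of_nonneg (by nlinarith)]
        ring

open intervalIntegral in
lemma aux2 {F : Type*} [NormedAddCommGroup F] [NormedSpace ℝ F] [CompleteSpace F]
    (g g' g'' : ℝ → F) (K : ℝ)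
    (hd : ∀ t, HasDerivAt g (g' t) t)
    (hd' : ∀ t, HasDerivAt g' (g'' t) t)
    (hc' : Continuous g') (hc : Continuous g'')
    (hK : ∀ t ∈ Set.Icc (0:ℝ) 1, ‖g'' t - g'' 0‖ ≤ K * t) :
    ‖g 1 - g 0 - g' 0 - (1/2 : ℝ) • g'' 0‖ ≤ K / 6 := by
  have hK0 : 0 ≤ K := by
    have := hK 1 (by norm_num)
    nlinarith [norm_nonneg (g'' 1 - g'' 0)]
  -- step 1
  have step1 : ∀ t ∈ Set.Icc (0:ℝ) 1, ‖g' t - g' 0 - t • g'' 0‖ ≤ K * t ^ 2 / 2 := by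
    intro t ht
    have hint : IntervalIntegrable g'' MeasureTheory.volume 0 t := hc.intervalIntegrable _ _
    have hftc : ∫ s in (0:ℝ)..t, g'' s = g' t - g' 0 :=
      integral_eq_sub_of_hasDerivAt (fun s _ => hd' s) hint
    have heq : g' t - g' 0 - t • g'' 0 = ∫ s in (0:ℝ)..t, (g'' s - g'' 0) := by
      rw [intervalIntegral.integral_sub hint intervalIntegrable_const, hftc,
        intervalIntegral.integral_const]
      simp
    rw [heq]
    have h1 : ‖∫ s in (0:ℝ)..t, (g'' s - g'' 0)‖ ≤ |∫ s in (0:ℝ)..t, K * s| := by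
      apply intervalIntegral.norm_integral_le_abs_of_norm_le
      · refine MeasureTheory.ae_restrict_of_forall_mem measurableSet_uIoc ?_
        intro s hs
        rw [Set.uIoc_of_le ht.1] at hs
        exact hK s ⟨le_of_lt hs.1, hs.2.trans ht.2⟩
      · exact (continuous_const.mul continuous_id).intervalIntegrable _ _
    calc ‖∫ s in (0:ℝ)..t, (g'' s - g'' 0)‖ ≤ |∫ s in (0:ℝ)..t, K * s| := h1
      _ = K * t ^ 2 / 2 := by
          rw [intervalIntegral.integral_const_mul, integral_id]
          rw [abs_of_nonneg (by nlinarith [sq_nonneg t])]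
          ring
  -- step 2
  have hint' : IntervalIntegrable g' MeasureTheory.volume 0 1 := hc'.intervalIntegrable _ _
  have hftc' : ∫ t in (0:ℝ)..1, g' t = g 1 - g 0 :=
    integral_eq_sub_of_hasDerivAt (fun t _ => hd t) hint'
  have hint2 : IntervalIntegrable (fun t : ℝ => t • g'' 0) MeasureTheory.volume 0 1 :=
    (continuous_id.smul continuous_const).intervalIntegrable _ _
  have heq : g 1 - g 0 - g' 0 - (1/2 : ℝ) • g'' 0
      = ∫ t in (0:ℝ)..1, (g' t - g' 0 - t • g'' 0) := by
    rw [intervalIntegral.integral_sub (hint'.sub intervalIntegrable_const) hint2,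
      intervalIntegral.integral_sub hint' intervalIntegrable_const, hftc',
      intervalIntegral.integral_const, intervalIntegral.integral_smul_const, integral_id]
    norm_num
  rw [heq]
  have h1 : ‖∫ t in (0:ℝ)..1, (g' t - g' 0 - t • g'' 0)‖
      ≤ |∫ t in (0:ℝ)..1, K * t ^ 2 / 2| := by
    apply intervalIntegral.norm_integral_le_abs_of_norm_le
    · refine MeasureTheory.ae_restrict_of_forall_mem measurableSet_uIoc ?_
      intro t ht
      rw [Set.uIoc_of_le (by norm_num : (0:ℝ) ≤ 1)] at ht
      exact step1 t ⟨le_of_lt ht.1, ht.2⟩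
    · apply Continuous.intervalIntegrable
      continuity
  calc ‖∫ t in (0:ℝ)..1, (g' t - g' 0 - t • g'' 0)‖ ≤ |∫ t in (0:ℝ)..1, K * t ^ 2 / 2| := h1
    _ = K / 6 := by
        have : ∀ t : ℝ, K * t ^ 2 / 2 = (K / 2) * t ^ 2 := by intro t; ring
        simp_rw [this]
        rw [intervalIntegral.integral_const_mul, integral_pow]
        rw [abs_of_nonneg (by norm_num; positivity)]
        ring

open intervalIntegral in
lemma derivNormLe {F : Type*} [NormedAddCommGroup F] [NormedSpace ℝ F] [CompleteSpace F]
    (g' g'' : ℝ → F) (M : ℝ)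
    (hd' : ∀ t, HasDerivAt g' (g'' t) t) (hc : Continuous g'')
    (hM : ∀ t ∈ Set.Icc (0:ℝ) 1, ‖g'' t‖ ≤ M) :
    ∀ t ∈ Set.Icc (0:ℝ) 1, ‖g' t - g' 0‖ ≤ M * t := by
  intro t ht
  have hftc : ∫ s in (0:ℝ)..t, g'' s = g' t - g' 0 :=
    integral_eq_sub_of_hasDerivAt (fun s _ => hd' s) (hc.intervalIntegrable _ _)
  rw [← hftc]
  have h1 : ‖∫ s in (0:ℝ)..t, g'' s‖ ≤ M * |t - 0| := by
    apply intervalIntegral.norm_integral_le_of_norm_le_const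
    intro s hs
    rw [Set.uIoc_of_le ht.1] at hs
    exact hM s ⟨hs.1.le, hs.2.trans ht.2⟩
  simpa [abs_of_nonneg ht.1] using h1

set_option maxHeartbeats 2000000 in
/-- Inner curvature cancellation. The Hessian-augmented model
`m(x) = h(C x_k + J_k d) + ½ dᵀHd` with `H = Σᵢ yᵢ ∇²Cᵢ(x_k)`, `y = ∇h(C x_k)`,
is third-order accurate: `|h(C x) - m(x)| ≤ M₃‖d‖³ + M₄‖d‖⁴` for `x` near `x_k`,
where `M₃ = L_h γ_C/6 + β_h L_C β_C/2` and `M₄ = β_h β_C²/8 + β_h L_C γ_C/6`. -/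
theorem stmt17 {m d : ℕ}
    (h : EuclideanSpace ℝ (Fin d) → ℝ)
    (hg : EuclideanSpace ℝ (Fin d) → EuclideanSpace ℝ (Fin d))
    (C : EuclideanSpace ℝ (Fin m) → EuclideanSpace ℝ (Fin d))
    (Lh βh LC βC γC : ℝ)
    (hLh : 0 ≤ Lh) (hβh : 0 ≤ βh) (hLC : 0 ≤ LC) (hβC : 0 ≤ βC) (hγC : 0 ≤ γC)
    (hh : ∀ u, HasGradientAt h (hg u) u)
    (hhgLip : ∀ u v, ‖hg u - hg v‖ ≤ βh * ‖u - v‖)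
    (hhgBdd : ∀ u, ‖hg u‖ ≤ Lh)
    (hC2 : ContDiff ℝ 2 C)
    (hCLip : ∀ u v, ‖C u - C v‖ ≤ LC * ‖u - v‖)
    (hHessBdd : ∀ x (v : EuclideanSpace ℝ (Fin d)) (u w : EuclideanSpace ℝ (Fin m)),
        |∑ i, v i * iteratedFDeriv ℝ 2 (fun z => C z i) x ![u, w]|
          ≤ βC * ‖v‖ * ‖u‖ * ‖w‖)
    (hHessLip : ∀ x z (v : EuclideanSpace ℝ (Fin d)) (u w : EuclideanSpace ℝ (Fin m)),
        |∑ i, v i * (iteratedFDeriv ℝ 2 (fun z' => C z' i) x ![u, w]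
            - iteratedFDeriv ℝ 2 (fun z' => C z' i) z ![u, w])|
          ≤ γC * ‖v‖ * ‖x - z‖ * ‖u‖ * ‖w‖)
    (xk : EuclideanSpace ℝ (Fin m)) :
    ∃ δ > (0 : ℝ), ∀ x, ‖x - xk‖ < δ →
      |h (C x) - (h (C xk + fderiv ℝ C xk (x - xk))
          + (1 / 2) * ∑ i, hg (C xk) i *
              iteratedFDeriv ℝ 2 (fun z => C z i) xk ![x - xk, x - xk])|
        ≤ (Lh * γC / 6 + βh * LC * βC / 2) * ‖x - xk‖ ^ 3
          + (βh * βC ^ 2 / 8 + βh * LC * γC / 6) * ‖x - xk‖ ^ 4 := by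
  have hC1 : Differentiable ℝ C := hC2.differentiable (by norm_num)
  have hΦc1 : ContDiff ℝ 1 (fderiv ℝ C) := hC2.fderiv_right (by norm_num)
  have hΦdiff : Differentiable ℝ (fderiv ℝ C) := hΦc1.differentiable (by norm_num)
  have hΦcont : Continuous (fderiv ℝ C) := hΦc1.continuous
  -- coordinate identity
  have coord : ∀ (x : EuclideanSpace ℝ (Fin m)) (i : Fin d) (u w : EuclideanSpace ℝ (Fin m)),
      iteratedFDeriv ℝ 2 (fun z => C z i) x ![u, w]
        = iteratedFDeriv ℝ 2 C x ![u, w] i := by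
    intro x i u w
    have hfun : (fun z => C z i) = (EuclideanSpace.proj (𝕜 := ℝ) i) ∘ C := rfl
    rw [hfun, ContinuousLinearMap.iteratedFDeriv_comp_left _ (hC2.contDiffAt (x := x)) (by norm_num)]
    rfl
  have sumEq : ∀ (x : EuclideanSpace ℝ (Fin m)) (v : EuclideanSpace ℝ (Fin d))
      (u w : EuclideanSpace ℝ (Fin m)),
      ∑ i, v i * iteratedFDeriv ℝ 2 (fun z => C z i) x ![u, w]
        = inner (𝕜 := ℝ) v (iteratedFDeriv ℝ 2 C x ![u, w]) := by
    intro x v u w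
    rw [PiLp.inner_apply]
    simp [coord]
    exact Finset.sum_congr rfl (fun _ _ => mul_comm _ _)
  have hB : ∀ (x : EuclideanSpace ℝ (Fin m)) (u w : EuclideanSpace ℝ (Fin m)),
      ‖iteratedFDeriv ℝ 2 C x ![u, w]‖ ≤ βC * ‖u‖ * ‖w‖ := by
    intro x u w
    have h1 := hHessBdd x (iteratedFDeriv ℝ 2 C x ![u, w]) u w
    rw [sumEq, real_inner_self_eq_norm_sq, abs_of_nonneg (sq_nonneg _)] at h1
    rcases (norm_nonneg (iteratedFDeriv ℝ 2 C x ![u, w])).eq_or_lt with h0 | h0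
    · rw [← h0]; positivity
    · nlinarith
  have hBlip : ∀ (x z : EuclideanSpace ℝ (Fin m)) (u w : EuclideanSpace ℝ (Fin m)),
      ‖iteratedFDeriv ℝ 2 C x ![u, w] - iteratedFDeriv ℝ 2 C z ![u, w]‖
        ≤ γC * ‖x - z‖ * ‖u‖ * ‖w‖ := by
    intro x z u w
    have h1 := hHessLip x z (iteratedFDeriv ℝ 2 C x ![u, w] - iteratedFDeriv ℝ 2 C z ![u, w]) u w
    have h2 : (∑ i, (iteratedFDeriv ℝ 2 C x ![u, w] - iteratedFDeriv ℝ 2 C z ![u, w]) i *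
        (iteratedFDeriv ℝ 2 (fun z' => C z' i) x ![u, w]
          - iteratedFDeriv ℝ 2 (fun z' => C z' i) z ![u, w]))
        = ‖iteratedFDeriv ℝ 2 C x ![u, w] - iteratedFDeriv ℝ 2 C z ![u, w]‖ ^ 2 := by
      rw [← real_inner_self_eq_norm_sq, PiLp.inner_apply]
      simp [coord]
      exact Finset.sum_congr rfl (fun _ _ => (sq _).symm)
    rw [h2, abs_of_nonneg (sq_nonneg _)] at h1
    rcases (norm_nonneg (iteratedFDeriv ℝ 2 C x ![u, w]
        - iteratedFDeriv ℝ 2 C z ![u, w])).eq_or_lt with h0 | h0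
    · rw [← h0]; positivity
    · nlinarith
  refine ⟨1, one_pos, fun x _ => ?_⟩
  set dv := x - xk with hdv
  have hline : ∀ t : ℝ, HasDerivAt (fun s : ℝ => xk + s • dv) dv t := by
    intro t
    simpa using ((hasDerivAt_id t).smul_const dv).const_add xk
  have hline1 : xk + (1:ℝ) • dv = x := by
    rw [one_smul, hdv]; abel
  have hline0 : xk + (0:ℝ) • dv = xk := by simp
  have hgd1 : ∀ t : ℝ, HasDerivAt (fun t : ℝ => C (xk + t • dv))
      (fderiv ℝ C (xk + t • dv) dv) t := by
    intro t
    exact (hC1 _).hasFDerivAt.comp_hasDerivAt t (hline t)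
  have hgd2 : ∀ t : ℝ, HasDerivAt (fun t : ℝ => fderiv ℝ C (xk + t • dv) dv)
      (iteratedFDeriv ℝ 2 C (xk + t • dv) ![dv, dv]) t := by
    intro t
    have h1 : HasDerivAt (fun t : ℝ => fderiv ℝ C (xk + t • dv))
        (fderiv ℝ (fderiv ℝ C) (xk + t • dv) dv) t :=
      (hΦdiff _).hasFDerivAt.comp_hasDerivAt t (hline t)
    have h2 := h1.clm_apply (hasDerivAt_const t dv)
    simpa [iteratedFDeriv_two_apply] using h2
  have hcont1 : Continuous fun t : ℝ => fderiv ℝ C (xk + t • dv) dv :=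
    (hΦcont.comp (continuous_const.add (continuous_id.smul continuous_const))).clm_apply continuous_const
  have hcont2 : Continuous fun t : ℝ => iteratedFDeriv ℝ 2 C (xk + t • dv) ![dv, dv] := by
    have hlip : LipschitzWith ((γC * (‖dv‖ * ‖dv‖ * ‖dv‖)).toNNReal)
        (fun t : ℝ => iteratedFDeriv ℝ 2 C (xk + t • dv) ![dv, dv]) := by
      apply LipschitzWith.of_dist_le_mul
      intro s t
      rw [dist_eq_norm, Real.dist_eq]
      have h1 := hBlip (xk + s • dv) (xk + t • dv) dv dv
      have hxz : xk + s • dv - (xk + t • dv) = (s - t) • dv := by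
        rw [sub_smul]; abel
      rw [hxz, norm_smul, Real.norm_eq_abs] at h1
      calc ‖iteratedFDeriv ℝ 2 C (xk + s • dv) ![dv, dv]
            - iteratedFDeriv ℝ 2 C (xk + t • dv) ![dv, dv]‖
          ≤ γC * (|s - t| * ‖dv‖) * ‖dv‖ * ‖dv‖ := h1
        _ ≤ ((γC * (‖dv‖ * ‖dv‖ * ‖dv‖)).toNNReal : ℝ) * |s - t| := by
            rw [Real.coe_toNNReal _ (by positivity)]
            ring_nf
            exact le_refl _
    exact hlip.continuous
  -- bound on second derivative along the line
  have hBd : ∀ t ∈ Set.Icc (0:ℝ) 1,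
      ‖iteratedFDeriv ℝ 2 C (xk + t • dv) ![dv, dv]‖ ≤ βC * ‖dv‖ ^ 2 := by
    intro t _
    have := hB (xk + t • dv) dv dv
    nlinarith [norm_nonneg dv]
  -- e bound
  have hK1 := derivNormLe _ _ (βC * ‖dv‖ ^ 2) hgd2 hcont2 hBd
  have hK1' : ∀ t ∈ Set.Icc (0:ℝ) 1,
      ‖fderiv ℝ C (xk + t • dv) dv - fderiv ℝ C (xk + (0:ℝ) • dv) dv‖
        ≤ (βC * ‖dv‖ ^ 2) * t := by
    intro t ht
    simpa using hK1 t ht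
  have hcont1' : Continuous fun t : ℝ => fderiv ℝ C (xk + t • dv) dv := hcont1
  have hEbound : ‖C x - C xk - fderiv ℝ C xk dv‖ ≤ βC * ‖dv‖ ^ 2 / 2 := by
    have h1 := aux1 (fun t : ℝ => C (xk + t • dv)) (fun t : ℝ => fderiv ℝ C (xk + t • dv) dv)
      (βC * ‖dv‖ ^ 2) hgd1 hcont1 hK1'
    simp only [hline1, hline0] at h1
    linarith [h1]
  -- r3 bound
  have hr3 : ‖C x - C xk - fderiv ℝ C xk dv
      - (1/2 : ℝ) • iteratedFDeriv ℝ 2 C xk ![dv, dv]‖ ≤ γC * ‖dv‖ ^ 3 / 6 := by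
    have hK2 : ∀ t ∈ Set.Icc (0:ℝ) 1,
        ‖iteratedFDeriv ℝ 2 C (xk + t • dv) ![dv, dv]
          - iteratedFDeriv ℝ 2 C (xk + (0:ℝ) • dv) ![dv, dv]‖ ≤ (γC * ‖dv‖ ^ 3) * t := by
      intro t ht
      have h1 := hBlip (xk + t • dv) (xk + (0:ℝ) • dv) dv dv
      have hxz : xk + t • dv - (xk + (0:ℝ) • dv) = t • dv := by
        rw [zero_smul]; abel
      rw [hxz, norm_smul, Real.norm_eq_abs, abs_of_nonneg ht.1] at h1
      calc ‖iteratedFDeriv ℝ 2 C (xk + t • dv) ![dv, dv]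
            - iteratedFDeriv ℝ 2 C (xk + (0:ℝ) • dv) ![dv, dv]‖
          ≤ γC * (t * ‖dv‖) * ‖dv‖ * ‖dv‖ := h1
        _ = (γC * ‖dv‖ ^ 3) * t := by ring
    have h1 := aux2 (fun t : ℝ => C (xk + t • dv)) (fun t : ℝ => fderiv ℝ C (xk + t • dv) dv)
      (fun t : ℝ => iteratedFDeriv ℝ 2 C (xk + t • dv) ![dv, dv])
      (γC * ‖dv‖ ^ 3) hgd1 hgd2 hcont1 hcont2 hK2
    simp only [hline1, hline0] at h1
    linarith [h1]
  -- h part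
  set a := C xk + fderiv ℝ C xk dv with ha
  set e := C x - a with he
  have hae : a + e = C x := by rw [he]; abel
  have heq : e = C x - C xk - fderiv ℝ C xk dv := by rw [he, ha]; abel
  have hEb : ‖e‖ ≤ βC * ‖dv‖ ^ 2 / 2 := by rw [heq]; exact hEbound
  have hr3e : ‖e - (1/2:ℝ) • iteratedFDeriv ℝ 2 C xk ![dv, dv]‖ ≤ γC * ‖dv‖ ^ 3 / 6 := by
    rw [heq]; exact hr3
  have hhder : ∀ t : ℝ, HasDerivAt (fun t : ℝ => h (a + t • e))
      (inner (𝕜 := ℝ) (hg (a + t • e)) e) t := by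
    intro t
    have h1 : HasDerivAt (fun s : ℝ => a + s • e) e t := by
      simpa using ((hasDerivAt_id t).smul_const e).const_add a
    have h2 := ((hh (a + t • e)).hasFDerivAt).comp_hasDerivAt t h1
    have h3 : HasDerivAt (h ∘ fun s : ℝ => a + s • e) (inner (𝕜 := ℝ) (hg (a + t • e)) e) t := by
      simpa [InnerProductSpace.toDual_apply_apply] using h2
    exact h3
  have hgc : Continuous hg := by
    have hlip : LipschitzWith βh.toNNReal hg := by
      apply LipschitzWith.of_dist_le_mul
      intro u v
      rw [dist_eq_norm, dist_eq_norm, Real.coe_toNNReal _ hβh]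
      exact hhgLip u v
    exact hlip.continuous
  have hhcont : Continuous fun t : ℝ => (inner (𝕜 := ℝ) (hg (a + t • e)) e : ℝ) :=
    (hgc.comp (continuous_const.add (continuous_id.smul continuous_const))).inner
      continuous_const
  have hhK : ∀ t ∈ Set.Icc (0:ℝ) 1,
      ‖(inner (𝕜 := ℝ) (hg (a + t • e)) e : ℝ) - inner (𝕜 := ℝ) (hg (a + (0:ℝ) • e)) e‖
        ≤ (βh * ‖e‖ ^ 2) * t := by
    intro t ht
    rw [← inner_sub_left]
    have h1 : ‖hg (a + t • e) - hg (a + (0:ℝ) • e)‖ ≤ βh * (t * ‖e‖) := by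
      have h2 := hhgLip (a + t • e) (a + (0:ℝ) • e)
      have h3 : a + t • e - (a + (0:ℝ) • e) = t • e := by rw [zero_smul]; abel
      rwa [h3, norm_smul, Real.norm_eq_abs, abs_of_nonneg ht.1] at h2
    calc ‖(inner (𝕜 := ℝ) (hg (a + t • e) - hg (a + (0:ℝ) • e)) e : ℝ)‖
        ≤ ‖hg (a + t • e) - hg (a + (0:ℝ) • e)‖ * ‖e‖ := norm_inner_le_norm _ _
      _ ≤ (βh * (t * ‖e‖)) * ‖e‖ := mul_le_mul_of_nonneg_right h1 (norm_nonneg _)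
      _ = (βh * ‖e‖ ^ 2) * t := by ring
  have hT1 : |h (C x) - h a - inner (𝕜 := ℝ) (hg a) e| ≤ βh * ‖e‖ ^ 2 / 2 := by
    have h1 := aux1 (fun t : ℝ => h (a + t • e))
      (fun t : ℝ => inner (𝕜 := ℝ) (hg (a + t • e)) e) (βh * ‖e‖ ^ 2) hhder hhcont hhK
    simp only [one_smul, zero_smul, add_zero, hae, Real.norm_eq_abs] at h1
    linarith
  -- T2
  have hJd : ‖fderiv ℝ C xk dv‖ ≤ LC * ‖dv‖ := by
    have hlip : LipschitzWith LC.toNNReal C := by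
      apply LipschitzWith.of_dist_le_mul
      intro u v
      rw [dist_eq_norm, dist_eq_norm, Real.coe_toNNReal _ hLC]
      exact hCLip u v
    calc ‖fderiv ℝ C xk dv‖ ≤ ‖fderiv ℝ C xk‖ * ‖dv‖ := ContinuousLinearMap.le_opNorm _ _
      _ ≤ LC * ‖dv‖ := by
          have h2 := norm_fderiv_le_of_lipschitz ℝ hlip (x₀ := xk)
          rw [Real.coe_toNNReal _ hLC] at h2
          exact mul_le_mul_of_nonneg_right h2 (norm_nonneg _)
  have hT2 : |(inner (𝕜 := ℝ) (hg a - hg (C xk)) e : ℝ)| ≤ βh * (LC * ‖dv‖) * ‖e‖ := by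
    calc |(inner (𝕜 := ℝ) (hg a - hg (C xk)) e : ℝ)|
        ≤ ‖hg a - hg (C xk)‖ * ‖e‖ := abs_real_inner_le_norm (hg a - hg (C xk)) e
      _ ≤ (βh * ‖fderiv ℝ C xk dv‖) * ‖e‖ := by
          apply mul_le_mul_of_nonneg_right _ (norm_nonneg _)
          have h2 := hhgLip a (C xk)
          have h3 : a - C xk = fderiv ℝ C xk dv := by rw [ha]; abel
          rwa [h3] at h2
      _ ≤ βh * (LC * ‖dv‖) * ‖e‖ :=
          mul_le_mul_of_nonneg_right (mul_le_mul_of_nonneg_left hJd hβh) (norm_nonneg _)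
  have hT3 : |(inner (𝕜 := ℝ) (hg (C xk))
      (e - (1/2:ℝ) • iteratedFDeriv ℝ 2 C xk ![dv, dv]) : ℝ)|
      ≤ Lh * (γC * ‖dv‖ ^ 3 / 6) := by
    calc |(inner (𝕜 := ℝ) (hg (C xk))
        (e - (1/2:ℝ) • iteratedFDeriv ℝ 2 C xk ![dv, dv]) : ℝ)|
        ≤ ‖hg (C xk)‖ * ‖e - (1/2:ℝ) • iteratedFDeriv ℝ 2 C xk ![dv, dv]‖ :=
          abs_real_inner_le_norm (hg (C xk)) (e - (1/2:ℝ) • iteratedFDeriv ℝ 2 C xk ![dv, dv])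
      _ ≤ Lh * (γC * ‖dv‖ ^ 3 / 6) :=
          mul_le_mul (hhgBdd _) hr3e (norm_nonneg _) hLh
  -- assembly
  have hS : (∑ i, hg (C xk) i * iteratedFDeriv ℝ 2 (fun z => C z i) xk ![dv, dv])
      = inner (𝕜 := ℝ) (hg (C xk)) (iteratedFDeriv ℝ 2 C xk ![dv, dv]) :=
    sumEq xk (hg (C xk)) dv dv
  rw [hS]
  have key : h (C x) - (h a
        + 1 / 2 * inner (𝕜 := ℝ) (hg (C xk)) (iteratedFDeriv ℝ 2 C xk ![dv, dv]))
      = (h (C x) - h a - inner (𝕜 := ℝ) (hg a) e)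
        + inner (𝕜 := ℝ) (hg a - hg (C xk)) e
        + inner (𝕜 := ℝ) (hg (C xk))
            (e - (1/2:ℝ) • iteratedFDeriv ℝ 2 C xk ![dv, dv]) := by
    have h1 : (inner (𝕜 := ℝ) (hg a - hg (C xk)) e : ℝ)
        = inner (𝕜 := ℝ) (hg a) e - inner (𝕜 := ℝ) (hg (C xk)) e :=
      inner_sub_left _ _ _
    have h2 : (inner (𝕜 := ℝ) (hg (C xk))
        (e - (1/2:ℝ) • iteratedFDeriv ℝ 2 C xk ![dv, dv]) : ℝ)
        = inner (𝕜 := ℝ) (hg (C xk)) e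
          - (1/2:ℝ) * inner (𝕜 := ℝ) (hg (C xk)) (iteratedFDeriv ℝ 2 C xk ![dv, dv]) := by
      rw [inner_sub_right, real_inner_smul_right]
    rw [h1, h2]
    ring
  rw [key]
  have habs : |(h (C x) - h a - inner (𝕜 := ℝ) (hg a) e)
        + inner (𝕜 := ℝ) (hg a - hg (C xk)) e
        + inner (𝕜 := ℝ) (hg (C xk))
            (e - (1/2:ℝ) • iteratedFDeriv ℝ 2 C xk ![dv, dv])|
      ≤ |h (C x) - h a - inner (𝕜 := ℝ) (hg a) e|
        + |(inner (𝕜 := ℝ) (hg a - hg (C xk)) e : ℝ)|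
        + |(inner (𝕜 := ℝ) (hg (C xk))
            (e - (1/2:ℝ) • iteratedFDeriv ℝ 2 C xk ![dv, dv]) : ℝ)| := by
    calc _ ≤ |(h (C x) - h a - inner (𝕜 := ℝ) (hg a) e)
          + inner (𝕜 := ℝ) (hg a - hg (C xk)) e|
          + |(inner (𝕜 := ℝ) (hg (C xk))
              (e - (1/2:ℝ) • iteratedFDeriv ℝ 2 C xk ![dv, dv]) : ℝ)| := abs_add_le _ _
      _ ≤ _ := by
          have := abs_add_le (h (C x) - h a - inner (𝕜 := ℝ) (hg a) e)
            (inner (𝕜 := ℝ) (hg a - hg (C xk)) e : ℝ)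
          linarith
  refine habs.trans ?_
  have hdn : (0:ℝ) ≤ ‖dv‖ := norm_nonneg _
  have hen : (0:ℝ) ≤ ‖e‖ := norm_nonneg _
  nlinarith [mul_nonneg (mul_nonneg hβh (sub_nonneg.2 hEb))
      (add_nonneg hen (by positivity : (0:ℝ) ≤ βC * ‖dv‖ ^ 2 / 2)),
    mul_nonneg (mul_nonneg (mul_nonneg hβh hLC) hdn) (sub_nonneg.2 hEb),
    mul_nonneg (mul_nonneg (mul_nonneg hβh hLC) hγC)
      (by positivity : (0:ℝ) ≤ ‖dv‖ ^ 4)]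
end

section
/- Let s : ℝ^n → ℝ be C² with ‖∇²s‖ ≤ β_s and γ_s-Lipschitz Hessian, and R : ℝ^m → ℝ^n be C¹, L_R-Lipschitz with β_R-Lipschitz Jacobian. Let J := J_R(x_k), H := Jᵀ∇²s(R(x_k))J, and define m(x) := s(R(x_k)) + ∇s(R(x_k))ᵀ(R(x) − R(x_k)) + (1/2)dᵀHd with d = x − x_k. Then |s(R(x)) − m(x)| ≤ (β_s L_R β_R/2 + γ_s L_R³/6)‖d‖³ + (β_s β_R²/8)‖d‖⁴ for all x. -/
theorem ftc_bound {F : Type*} [NormedAddCommGroup F] [NormedSpace ℝ F] [CompleteSpace F]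
    (φ : ℝ → F) (φ' : ℝ → F) (g : ℝ → ℝ)
    (hφ : ∀ t, HasDerivAt φ (φ' t) t)
    (hcont : Continuous φ') (hg : Continuous g)
    (hbd : ∀ t ∈ Set.Icc (0:ℝ) 1, ‖φ' t‖ ≤ g t) :
    ‖φ 1 - φ 0‖ ≤ ∫ t in (0:ℝ)..1, g t := by
  have h1 : ∫ t in (0:ℝ)..1, φ' t = φ 1 - φ 0 :=
    intervalIntegral.integral_eq_sub_of_hasDerivAt (fun t _ => hφ t)
      (hcont.intervalIntegrable _ _)
  rw [← h1]
  calc ‖∫ t in (0:ℝ)..1, φ' t‖ ≤ ∫ t in (0:ℝ)..1, ‖φ' t‖ :=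
        intervalIntegral.norm_integral_le_integral_norm zero_le_one
    _ ≤ ∫ t in (0:ℝ)..1, g t :=
        intervalIntegral.integral_mono_on zero_le_one
          (hcont.norm.intervalIntegrable _ _) (hg.intervalIntegrable _ _)
          (fun t ht => hbd t ht)

theorem taylor1 {E F : Type*} [NormedAddCommGroup E] [NormedSpace ℝ E]
    [NormedAddCommGroup F] [NormedSpace ℝ F] [CompleteSpace F]
    (f : E → F) (f' : E → (E →L[ℝ] F)) (L : ℝ)
    (hf : ∀ u, HasFDerivAt f (f' u) u)
    (hLip : ∀ u v, ‖f' u - f' v‖ ≤ L * ‖u - v‖)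
    (x y : E) :
    ‖f y - f x - f' x (y - x)‖ ≤ L / 2 * ‖y - x‖ ^ 2 := by
  set d := y - x with hd
  have hf'cont : Continuous f' := by
    rcases le_or_gt L 0 with hL | hL
    · have : ∀ u v, f' u = f' v := by
        intro u v
        have := hLip u v
        have h0 : ‖f' u - f' v‖ ≤ 0 :=
          this.trans (mul_nonpos_of_nonpos_of_nonneg hL (norm_nonneg _))
        have := le_antisymm h0 (norm_nonneg _)
        rwa [norm_eq_zero, sub_eq_zero] at this
      exact continuous_const.congr fun u => (this u (0:E)).symm
    · have : LipschitzWith ⟨L, hL.le⟩ f' := by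
        apply LipschitzWith.of_dist_le_mul
        intro u v
        rw [dist_eq_norm, dist_eq_norm]; exact hLip u v
      exact this.continuous
  have hline : ∀ t : ℝ, HasDerivAt (fun t : ℝ => x + t • d) d t := by
    intro t
    simpa using ((hasDerivAt_id t).smul_const d).const_add x
  set φ : ℝ → F := fun t => f (x + t • d) - t • (f' x d) with hφdef
  have hφ : ∀ t, HasDerivAt φ (f' (x + t • d) d - f' x d) t := by
    intro t
    have h1 : HasDerivAt (fun t : ℝ => f (x + t • d)) (f' (x + t • d) d) t :=
      (hf (x + t • d)).comp_hasDerivAt t (hline t)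
    have h2 : HasDerivAt (fun t : ℝ => t • (f' x d)) (f' x d) t := by
      simpa using (hasDerivAt_id t).smul_const (f' x d)
    exact h1.sub h2
  have hcont : Continuous fun t : ℝ => f' (x + t • d) d - f' x d := by
    have : Continuous fun t : ℝ => x + t • d := by continuity
    have h1 : Continuous fun t : ℝ => f' (x + t • d) d := by
      exact (ContinuousLinearMap.apply ℝ F d).continuous.comp (hf'cont.comp this)
    exact h1.sub continuous_const
  have hbd : ∀ t ∈ Set.Icc (0:ℝ) 1, ‖f' (x + t • d) d - f' x d‖ ≤ (L * ‖d‖ ^ 2) * t := by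
    intro t ht
    have : f' (x + t • d) d - f' x d = (f' (x + t • d) - f' x) d := by simp
    rw [this]
    calc ‖(f' (x + t • d) - f' x) d‖ ≤ ‖f' (x + t • d) - f' x‖ * ‖d‖ :=
          (f' (x + t • d) - f' x).le_opNorm d
      _ ≤ (L * ‖x + t • d - x‖) * ‖d‖ := by
          gcongr; exact hLip _ _
      _ = (L * ‖d‖ ^ 2) * t := by
          rw [add_sub_cancel_left, norm_smul, Real.norm_eq_abs, abs_of_nonneg ht.1]
          ring
  have key := ftc_bound φ _ _ hφ hcont (by continuity) hbd
  have hint : ∫ t in (0:ℝ)..1, (L * ‖d‖ ^ 2) * t = L / 2 * ‖d‖ ^ 2 := by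
    rw [intervalIntegral.integral_const_mul, integral_id]; ring
  rw [hint] at key
  have hφval : φ 1 - φ 0 = f y - f x - f' x d := by
    simp [hφdef, hd]; abel
  rwa [hφval] at key

theorem taylor2 {E : Type*} [NormedAddCommGroup E] [InnerProductSpace ℝ E] [CompleteSpace E]
    (s : E → ℝ) (sg : E → E) (Hs : E → (E →L[ℝ] E)) (γ : ℝ)
    (hs : ∀ u, HasGradientAt s (sg u) u)
    (hH : ∀ u, HasFDerivAt sg (Hs u) u)
    (hLip : ∀ u v, ‖Hs u - Hs v‖ ≤ γ * ‖u - v‖)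
    (x Δ : E) :
    |s (x + Δ) - s x - (inner ℝ (sg x) Δ : ℝ) - 1/2 * (inner ℝ (Hs x Δ) Δ : ℝ)|
      ≤ γ/6 * ‖Δ‖^3 := by
  have hsgcont : Continuous sg :=
    continuous_iff_continuousAt.2 fun u => (hH u).continuousAt
  have hline : ∀ t : ℝ, HasDerivAt (fun t : ℝ => x + t • Δ) Δ t := fun t => by
    simpa using ((hasDerivAt_id t).smul_const Δ).const_add x
  have hlinec : Continuous fun t : ℝ => x + t • Δ := by continuity
  set c1 : ℝ := inner ℝ (sg x) Δ with hc1
  set c2 : ℝ := inner ℝ (Hs x Δ) Δ with hc2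
  set φ : ℝ → ℝ := fun t => s (x + t • Δ) - t * c1 - t^2/2 * c2 with hφdef
  have hφ : ∀ t, HasDerivAt φ ((inner ℝ (sg (x + t • Δ)) Δ : ℝ) - c1 - t * c2) t := by
    intro t
    have h1 : HasDerivAt (fun t : ℝ => s (x + t • Δ))
        (InnerProductSpace.toDual ℝ E (sg (x + t • Δ)) Δ) t :=
      ((hs (x + t • Δ)).hasFDerivAt).comp_hasDerivAt t (hline t)
    rw [InnerProductSpace.toDual_apply_apply] at h1
    have h2 : HasDerivAt (fun t : ℝ => t * c1) c1 t := by
      simpa using (hasDerivAt_id t).mul_const c1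
    have h3 : HasDerivAt (fun t : ℝ => t^2/2 * c2) (t * c2) t := by
      have := ((hasDerivAt_pow 2 t).div_const 2).mul_const c2
      refine this.congr_deriv ?_
      norm_num
    exact (h1.sub h2).sub h3
  have hcont : Continuous fun t : ℝ => (inner ℝ (sg (x + t • Δ)) Δ : ℝ) - c1 - t * c2 := by
    exact (((hsgcont.comp hlinec).inner continuous_const).sub continuous_const).sub
      (continuous_id.mul continuous_const)
  have hbd : ∀ t ∈ Set.Icc (0:ℝ) 1,
      ‖(inner ℝ (sg (x + t • Δ)) Δ : ℝ) - c1 - t * c2‖ ≤ (γ/2 * ‖Δ‖^3) * t^2 := by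
    intro t ht
    have heq : (inner ℝ (sg (x + t • Δ)) Δ : ℝ) - c1 - t * c2
        = inner ℝ (sg (x + t • Δ) - sg x - Hs x (t • Δ)) Δ := by
      rw [hc1, hc2, inner_sub_left, inner_sub_left, map_smul, real_inner_smul_left]
      try ring
    rw [Real.norm_eq_abs, heq]
    calc |(inner ℝ (sg (x + t • Δ) - sg x - Hs x (t • Δ)) Δ : ℝ)|
        ≤ ‖sg (x + t • Δ) - sg x - Hs x (t • Δ)‖ * ‖Δ‖ := abs_real_inner_le_norm _ _
      _ ≤ (γ/2 * ‖t • Δ‖^2) * ‖Δ‖ := by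
          gcongr
          have := taylor1 sg Hs γ hH hLip x (x + t • Δ)
          rwa [add_sub_cancel_left] at this
      _ = (γ/2 * ‖Δ‖^3) * t^2 := by
          rw [norm_smul, Real.norm_eq_abs, abs_of_nonneg ht.1]
          ring
  have key := ftc_bound φ _ _ hφ hcont (by continuity) hbd
  have hint : ∫ t in (0:ℝ)..1, (γ/2 * ‖Δ‖^3) * t^2 = γ/6 * ‖Δ‖^3 := by
    rw [intervalIntegral.integral_const_mul, integral_pow]
    norm_num
    try ring
  rw [hint] at key
  have hφval : φ 1 - φ 0 = s (x + Δ) - s x - c1 - 1/2 * c2 := by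
    simp [hφdef]; ring
  rwa [hφval, Real.norm_eq_abs] at key

/-- Outer curvature cancellation. With `H = Jᵀ ∇²s(R x_k) J`, the model
`m(x) = s(R x_k) + ⟪∇s(R x_k), R x - R x_k⟫ + ½ dᵀHd` satisfies
`|s(R x) - m(x)| ≤ (β_s L_R β_R/2 + γ_s L_R³/6)‖d‖³ + (β_s β_R²/8)‖d‖⁴` for all `x`. -/
theorem stmt18 {m n : ℕ}
    (s : EuclideanSpace ℝ (Fin n) → ℝ)
    (sg : EuclideanSpace ℝ (Fin n) → EuclideanSpace ℝ (Fin n))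
    (Hs : EuclideanSpace ℝ (Fin n) → (EuclideanSpace ℝ (Fin n) →L[ℝ] EuclideanSpace ℝ (Fin n)))
    (R : EuclideanSpace ℝ (Fin m) → EuclideanSpace ℝ (Fin n))
    (J : EuclideanSpace ℝ (Fin m) → (EuclideanSpace ℝ (Fin m) →L[ℝ] EuclideanSpace ℝ (Fin n)))
    (βs γs LR βR : ℝ) (hβs : 0 ≤ βs) (hγs : 0 ≤ γs) (hLR : 0 ≤ LR) (hβR : 0 ≤ βR)
    (hs : ∀ u, HasGradientAt s (sg u) u)
    (hHess : ∀ u, HasFDerivAt sg (Hs u) u)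
    (hHessBdd : ∀ u, ‖Hs u‖ ≤ βs)
    (hHessLip : ∀ u v, ‖Hs u - Hs v‖ ≤ γs * ‖u - v‖)
    (hR : ∀ u, HasFDerivAt R (J u) u)
    (hRLip : ∀ u v, ‖R u - R v‖ ≤ LR * ‖u - v‖)
    (hJLip : ∀ u v, ‖J u - J v‖ ≤ βR * ‖u - v‖)
    (xk : EuclideanSpace ℝ (Fin m)) :
    ∀ x, |s (R x) - (s (R xk) + (inner ℝ (sg (R xk)) (R x - R xk) : ℝ)
          + (1 / 2) * (inner ℝ (Hs (R xk) (J xk (x - xk))) (J xk (x - xk)) : ℝ))|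
      ≤ (βs * LR * βR / 2 + γs * LR ^ 3 / 6) * ‖x - xk‖ ^ 3
        + (βs * βR ^ 2 / 8) * ‖x - xk‖ ^ 4 := by
  intro x
  set d : EuclideanSpace ℝ (Fin m) := x - xk with hd
  set Δ : EuclideanSpace ℝ (Fin n) := R x - R xk with hΔdef
  set u0 : EuclideanSpace ℝ (Fin n) := R xk with hu0
  set Jd : EuclideanSpace ℝ (Fin n) := J xk d with hJddef
  set e : EuclideanSpace ℝ (Fin n) := Δ - Jd with hedef
  have hA : ‖e‖ ≤ βR / 2 * ‖d‖ ^ 2 := taylor1 R J βR hR hJLip xk x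
  have hB : |s (u0 + Δ) - s u0 - (inner ℝ (sg u0) Δ : ℝ)
      - 1/2 * (inner ℝ (Hs u0 Δ) Δ : ℝ)| ≤ γs/6 * ‖Δ‖^3 :=
    taylor2 s sg Hs γs hs hHess hHessLip u0 Δ
  have hRx : u0 + Δ = R x := by rw [hu0, hΔdef]; abel
  rw [hRx] at hB
  have hΔ : ‖Δ‖ ≤ LR * ‖d‖ := hRLip x xk
  have hJn : ‖J xk‖ ≤ LR := by
    apply (hR xk).le_of_lip' hLR
    exact Filter.Eventually.of_forall fun u => hRLip u xk
  have hJd : ‖Jd‖ ≤ LR * ‖d‖ :=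
    ((J xk).le_opNorm d).trans (mul_le_mul_of_nonneg_right hJn (norm_nonneg d))
  have haux : ∀ a b : EuclideanSpace ℝ (Fin n),
      |(inner ℝ (Hs u0 a) b : ℝ)| ≤ βs * ‖a‖ * ‖b‖ := by
    intro a b
    calc |(inner ℝ (Hs u0 a) b : ℝ)| ≤ ‖Hs u0 a‖ * ‖b‖ := abs_real_inner_le_norm _ _
      _ ≤ (‖Hs u0‖ * ‖a‖) * ‖b‖ := by gcongr; exact (Hs u0).le_opNorm a
      _ ≤ βs * ‖a‖ * ‖b‖ := by gcongr; exact hHessBdd u0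
  have hΔe : Δ = Jd + e := by rw [hedef]; abel
  have hcross : (inner ℝ (Hs u0 Δ) Δ : ℝ)
      = inner ℝ (Hs u0 Jd) Jd + inner ℝ (Hs u0 Jd) e + inner ℝ (Hs u0 e) Jd
        + inner ℝ (Hs u0 e) e := by
    rw [hΔe, map_add, inner_add_left, inner_add_right, inner_add_right]
    ring
  -- decomposition of the total error
  have hsplit : s (R x) - (s u0 + (inner ℝ (sg u0) Δ : ℝ)
        + (1 / 2) * (inner ℝ (Hs u0 Jd) Jd : ℝ))
      = (s (R x) - s u0 - (inner ℝ (sg u0) Δ : ℝ) - 1/2 * (inner ℝ (Hs u0 Δ) Δ : ℝ))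
        + 1/2 * ((inner ℝ (Hs u0 Jd) e : ℝ) + (inner ℝ (Hs u0 e) Jd : ℝ)
          + (inner ℝ (Hs u0 e) e : ℝ)) := by
    rw [hcross]; ring
  rw [hsplit]
  have h1 := haux Jd e
  have h2 := haux e Jd
  have h3 := haux e e
  have hde : ‖Jd‖ * ‖e‖ ≤ (LR * ‖d‖) * (βR / 2 * ‖d‖ ^ 2) :=
    mul_le_mul hJd hA (norm_nonneg _) (by positivity)
  have hee : ‖e‖ * ‖e‖ ≤ (βR / 2 * ‖d‖ ^ 2) * (βR / 2 * ‖d‖ ^ 2) :=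
    mul_le_mul hA hA (norm_nonneg _) (by positivity)
  have hΔ3 : ‖Δ‖ ^ 3 ≤ (LR * ‖d‖) ^ 3 :=
    pow_le_pow_left₀ (norm_nonneg _) hΔ 3
  calc |(s (R x) - s u0 - (inner ℝ (sg u0) Δ : ℝ) - 1/2 * (inner ℝ (Hs u0 Δ) Δ : ℝ))
        + 1/2 * ((inner ℝ (Hs u0 Jd) e : ℝ) + (inner ℝ (Hs u0 e) Jd : ℝ)
          + (inner ℝ (Hs u0 e) e : ℝ))|
      ≤ |s (R x) - s u0 - (inner ℝ (sg u0) Δ : ℝ) - 1/2 * (inner ℝ (Hs u0 Δ) Δ : ℝ)|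
        + 1/2 * (|(inner ℝ (Hs u0 Jd) e : ℝ)| + |(inner ℝ (Hs u0 e) Jd : ℝ)|
          + |(inner ℝ (Hs u0 e) e : ℝ)|) := by
        have := abs_add_le (s (R x) - s u0 - (inner ℝ (sg u0) Δ : ℝ)
            - 1/2 * (inner ℝ (Hs u0 Δ) Δ : ℝ))
          (1/2 * ((inner ℝ (Hs u0 Jd) e : ℝ) + (inner ℝ (Hs u0 e) Jd : ℝ)
            + (inner ℝ (Hs u0 e) e : ℝ)))
        refine this.trans ?_
        gcongr
        rw [abs_mul, abs_of_nonneg (by norm_num : (0:ℝ) ≤ 1/2)]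
        gcongr
        exact (abs_add_three _ _ _)
    _ ≤ γs/6 * ‖Δ‖^3 + 1/2 * ((βs * ‖Jd‖ * ‖e‖) + (βs * ‖e‖ * ‖Jd‖)
          + (βs * ‖e‖ * ‖e‖)) := by gcongr
    _ ≤ (βs * LR * βR / 2 + γs * LR ^ 3 / 6) * ‖d‖ ^ 3
        + (βs * βR ^ 2 / 8) * ‖d‖ ^ 4 := by
        have e1 : γs/6 * ‖Δ‖^3 ≤ γs/6 * (LR * ‖d‖)^3 :=
          mul_le_mul_of_nonneg_left hΔ3 (by positivity)
        have e2 : βs * (‖Jd‖ * ‖e‖) ≤ βs * ((LR * ‖d‖) * (βR / 2 * ‖d‖ ^ 2)) :=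
          mul_le_mul_of_nonneg_left hde hβs
        have e3 : βs/2 * (‖e‖ * ‖e‖) ≤ βs/2 * ((βR / 2 * ‖d‖ ^ 2) * (βR / 2 * ‖d‖ ^ 2)) :=
          mul_le_mul_of_nonneg_left hee (by positivity)
        ring_nf at e1 e2 e3 ⊢
        linarith [e1, e2, e3]
end
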